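/- Let x_1,…,x_n be positive integers with x_1+⋯+x_n = 2N, let Q(x) be the partition constraint graph P(x) together with an additional edge g = {U,W} of weight N, let C_1 be the configuration that orients g toward W, every edge {U,v_i} toward U, and every edge {W,v_i} toward v_i, and let C_2 be the configuration obtained from C_1 by reversing the orientation of every edge of Q(x). Then C_1 and C_2 are legal, and there exists a reconfiguration sequence from C_1 to C_2 in which each edge is reversed at most once, if and only if there exists a subset S ⊆ {1,…,n} with ∑_{i∈S} x_i = N. -/

import Mathlib

/-!
STATEMENT 3: Let x_1,…,x_n be positive integers with x_1+⋯+x_n = 2N, let Q(x)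
be the partition constraint graph P(x) together with an additional edge
g = {U,W} of weight N, let C_1 be the configuration that orients g toward W,
every edge {U,v_i} toward U, and every edge {W,v_i} toward v_i, and let C_2 be
the configuration obtained from C_1 by reversing the orientation of every edge
of Q(x). Then C_1 and C_2 are legal, and there exists a reconfiguration
sequence from C_1 to C_2 in which each edge is reversed at most once, if and
only if there exists a subset S ⊆ {1,…,n} with ∑_{i∈S} x_i = N.
-/

/-- A configuration of a constraint graph assigns to each edge one of its
two endpoints (its head). -/
def IsConf {V : Type} (G : SimpleGraph V) (C : Sym2 V → V) : Prop :=
  ∀ e ∈ G.edgeSet, C e ∈ e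

/-- A configuration is legal if every vertex receives inflow (total weight of
edges whose head is that vertex) at least its minimum inflow. -/
def Legal {V : Type} [Fintype V] [DecidableEq V] (G : SimpleGraph V)
    [DecidableRel G.Adj] (w : Sym2 V → ℕ) (μ : V → ℕ) (C : Sym2 V → V) : Prop :=
  ∀ v : V, μ v ≤ ∑ e ∈ G.edgeFinset, if C e = v then w e else 0

/-- Two configurations agree (as orientations of the edges of `G`). -/
def ConfEq {V : Type} (G : SimpleGraph V) (C C' : Sym2 V → V) : Prop :=
  ∀ e ∈ G.edgeSet, C e = C' e

/-- One reconfiguration step: exactly one edge changes its orientation. -/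
def Step {V : Type} (G : SimpleGraph V) (C C' : Sym2 V → V) : Prop :=
  ∃ e ∈ G.edgeSet, C e ≠ C' e ∧ ∀ f ∈ G.edgeSet, f ≠ e → C f = C' f

/-- A reconfiguration sequence: every configuration is a legal configuration
and each consecutive pair differs in the orientation of exactly one edge. -/
def IsReconfSeq {V : Type} [Fintype V] [DecidableEq V] (G : SimpleGraph V)
    [DecidableRel G.Adj] (w : Sym2 V → ℕ) (μ : V → ℕ) {m : ℕ}
    (Cs : Fin (m + 1) → Sym2 V → V) : Prop :=
  (∀ i, IsConf G (Cs i) ∧ Legal G w μ (Cs i)) ∧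
    ∀ i : Fin m, Step G (Cs i.castSucc) (Cs i.succ)

/-- In the sequence, each edge is reversed at most once. -/
def AtMostOnce {V : Type} (G : SimpleGraph V) {m : ℕ}
    (Cs : Fin (m + 1) → Sym2 V → V) : Prop :=
  ∀ e ∈ G.edgeSet, ∀ i j : Fin m,
    Cs i.castSucc e ≠ Cs i.succ e → Cs j.castSucc e ≠ Cs j.succ e → i = j

/-- Vertices of the partition constraint graph: `U`, `W` and `v i` for `i < n`. -/
inductive PVert (n : ℕ) : Type
  | U : PVert n
  | W : PVert n
  | v : Fin n → PVert n
deriving DecidableEq, Fintype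

/-- Adjacency of `Q(x)`: `U` and `W` are each joined to every `v i`, and
additionally `U` is joined to `W`. -/
def qadjB {n : ℕ} : PVert n → PVert n → Bool
  | .U, .v _ => true
  | .v _, .U => true
  | .W, .v _ => true
  | .v _, .W => true
  | .U, .W => true
  | .W, .U => true
  | _, _ => false

/-- The underlying graph of the constraint graph `Q(x)`. -/
def QGraph (n : ℕ) : SimpleGraph (PVert n) where
  Adj a b := qadjB a b
  symm := ⟨by intro a b h; cases a <;> cases b <;> simp_all [qadjB]⟩
  loopless := ⟨by intro a; cases a <;> simp [qadjB]⟩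

instance (n : ℕ) : DecidableRel (QGraph n).Adj :=
  fun a b => inferInstanceAs (Decidable (qadjB a b = true))

/-- Edge weights of `Q(x)` as a symmetric pair function: the edges `{U, v i}`
and `{W, v i}` both have weight `x i`, and the edge `g = {U,W}` has weight `N`. -/
def wPairQ {n : ℕ} (x : Fin n → ℕ) (N : ℕ) : PVert n → PVert n → ℕ
  | .U, .v i => x i
  | .v i, .U => x i
  | .W, .v i => x i
  | .v i, .W => x i
  | .U, .W => N
  | .W, .U => N
  | _, _ => 0

/-- Edge weights of `Q(x)`. -/
def wQ {n : ℕ} (x : Fin n → ℕ) (N : ℕ) : Sym2 (PVert n) → ℕ :=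
  Sym2.lift ⟨wPairQ x N, by intro a b; cases a <;> cases b <;> rfl⟩

/-- Minimum inflows: `μ(U) = μ(W) = N` and `μ(v i) = x i`. -/
def μQ {n : ℕ} (x : Fin n → ℕ) (N : ℕ) : PVert n → ℕ
  | .U => N
  | .W => N
  | .v i => x i

/-- The head function of the initial configuration `C₁`: `g = {U,W}` is
oriented toward `W`, each `{U, v i}` toward `U`, each `{W, v i}` toward `v i`. -/
def initHead {n : ℕ} : PVert n → PVert n → PVert n
  | .U, .v _ => .U
  | .v _, .U => .U
  | .W, .v i => .v i
  | .v i, .W => .v i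
  | .U, .W => .W
  | .W, .U => .W
  | _, _ => .U

/-- The initial configuration `C₁`. -/
def C1 {n : ℕ} : Sym2 (PVert n) → PVert n :=
  Sym2.lift ⟨initHead, by intro a b; cases a <;> cases b <;> rfl⟩

/-- The additional edge `g = {U, W}`. -/
def gEdge (n : ℕ) : Sym2 (PVert n) := s(PVert.U, PVert.W)

/-- The head function of the final configuration `C₂`, obtained from `C₁` by
reversing every edge: `g = {U,W}` is oriented toward `U`, each `{U, v i}`
toward `v i`, each `{W, v i}` toward `W`. -/
def finHead {n : ℕ} : PVert n → PVert n → PVert n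
  | .U, .v i => .v i
  | .v i, .U => .v i
  | .W, .v _ => .W
  | .v _, .W => .W
  | .U, .W => .U
  | .W, .U => .U
  | _, _ => .U

/-- The final configuration `C₂`. -/
def C2 {n : ℕ} : Sym2 (PVert n) → PVert n :=
  Sym2.lift ⟨finHead, by intro a b; cases a <;> cases b <;> rfl⟩

/-! ### Auxiliary material -/

namespace Aux3

open Finset

variable {n : ℕ}

/-- The edge `{U, v i}`. -/
def eU (i : Fin n) : Sym2 (PVert n) := s(PVert.U, PVert.v i)

/-- The edge `{W, v i}`. -/
def eW (i : Fin n) : Sym2 (PVert n) := s(PVert.W, PVert.v i)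

lemma eU_inj : Function.Injective (eU (n := n)) := by
  intro i j h
  simpa [eU, Sym2.eq_iff] using h

lemma eW_inj : Function.Injective (eW (n := n)) := by
  intro i j h
  simpa [eW, Sym2.eq_iff] using h

lemma g_mem : gEdge n ∈ (QGraph n).edgeSet := by
  simp [gEdge, SimpleGraph.mem_edgeSet, QGraph, qadjB]

lemma eU_mem (i : Fin n) : eU i ∈ (QGraph n).edgeSet := by
  simp [eU, SimpleGraph.mem_edgeSet, QGraph, qadjB]

lemma eW_mem (i : Fin n) : eW i ∈ (QGraph n).edgeSet := by
  simp [eW, SimpleGraph.mem_edgeSet, QGraph, qadjB]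

lemma edgeFinset_eq :
    (QGraph n).edgeFinset =
      insert (gEdge n) ((univ.image eU) ∪ (univ.image eW)) := by
  ext e
  induction e using Sym2.ind with
  | _ a b =>
    simp only [SimpleGraph.mem_edgeFinset, SimpleGraph.mem_edgeSet, Finset.mem_insert,
      Finset.mem_union, Finset.mem_image, Finset.mem_univ, true_and, gEdge, eU, eW]
    cases a <;> cases b <;>
      simp [QGraph, qadjB, Sym2.eq_iff]

lemma g_ne_eU (i : Fin n) : gEdge n ≠ eU i := by
  simp [gEdge, eU, Sym2.eq_iff]

lemma g_ne_eW (i : Fin n) : gEdge n ≠ eW i := by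
  simp [gEdge, eW, Sym2.eq_iff]

lemma eU_ne_eW (i j : Fin n) : eU i ≠ eW j := by
  simp [eU, eW, Sym2.eq_iff]

lemma sum_edge (f : Sym2 (PVert n) → ℕ) :
    ∑ e ∈ (QGraph n).edgeFinset, f e =
      f (gEdge n) + ((∑ i, f (eU i)) + ∑ i, f (eW i)) := by
  rw [edgeFinset_eq, Finset.sum_insert, Finset.sum_union, Finset.sum_image, Finset.sum_image]
  · intro i _ j _ h; exact eW_inj h
  · intro i _ j _ h; exact eU_inj h
  · rw [Finset.disjoint_left]
    rintro a ha hb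
    simp only [Finset.mem_image, Finset.mem_univ, true_and] at ha hb
    obtain ⟨i, rfl⟩ := ha
    obtain ⟨j, hj⟩ := hb
    exact eU_ne_eW i j hj.symm
  · simp only [Finset.mem_union, Finset.mem_image, Finset.mem_univ, true_and]
    rintro (⟨i, hi⟩ | ⟨i, hi⟩)
    · exact g_ne_eU i hi.symm
    · exact g_ne_eW i hi.symm

lemma wQ_g (x : Fin n → ℕ) (N : ℕ) : wQ x N (gEdge n) = N := rfl
lemma wQ_eU (x : Fin n → ℕ) (N : ℕ) (i : Fin n) : wQ x N (eU i) = x i := rfl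
lemma wQ_eW (x : Fin n → ℕ) (N : ℕ) (i : Fin n) : wQ x N (eW i) = x i := rfl

lemma C1_g : C1 (gEdge n) = PVert.W := rfl
lemma C1_eU (i : Fin n) : C1 (eU i) = PVert.U := rfl
lemma C1_eW (i : Fin n) : C1 (eW i) = PVert.v i := rfl
lemma C2_g : C2 (gEdge n) = PVert.U := rfl
lemma C2_eU (i : Fin n) : C2 (eU i) = PVert.v i := rfl
lemma C2_eW (i : Fin n) : C2 (eW i) = PVert.W := rfl

lemma isConf_C1 : IsConf (QGraph n) (C1 (n := n)) := by
  intro e he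
  induction e using Sym2.ind with
  | _ a b =>
    cases a <;> cases b <;>
      simp_all [SimpleGraph.mem_edgeSet, QGraph, qadjB, C1, initHead, Sym2.mem_iff]

lemma isConf_C2 : IsConf (QGraph n) (C2 (n := n)) := by
  intro e he
  induction e using Sym2.ind with
  | _ a b =>
    cases a <;> cases b <;>
      simp_all [SimpleGraph.mem_edgeSet, QGraph, qadjB, C2, finHead, Sym2.mem_iff]

/-- Unfolding of the legality condition using the explicit edge decomposition. -/
lemma legal_iff (x : Fin n → ℕ) (N : ℕ) (C : Sym2 (PVert n) → PVert n) :
    Legal (QGraph n) (wQ x N) (μQ x N) C ↔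
      ∀ u : PVert n, μQ x N u ≤
        (if C (gEdge n) = u then N else 0) +
          ((∑ i, if C (eU i) = u then x i else 0) +
            ∑ i, if C (eW i) = u then x i else 0) := by
  unfold Legal
  refine forall_congr' fun u => ?_
  rw [sum_edge (fun e => if C e = u then wQ x N e else 0)]
  simp [wQ_g, wQ_eU, wQ_eW]

lemma legal_C1 (x : Fin n → ℕ) (N : ℕ) (hsum : ∑ i, x i = 2 * N) :
    Legal (QGraph n) (wQ x N) (μQ x N) (C1 (n := n)) := by
  rw [legal_iff]
  intro u
  cases u with
  | U =>
      simp only [C1_g, C1_eU, C1_eW, μQ]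
      simp [hsum]
      omega
  | W => simp [C1_g, C1_eU, C1_eW, μQ]
  | v j => simp [C1_g, C1_eU, C1_eW, μQ, Finset.sum_ite_eq']

lemma legal_C2 (x : Fin n → ℕ) (N : ℕ) (hsum : ∑ i, x i = 2 * N) :
    Legal (QGraph n) (wQ x N) (μQ x N) (C2 (n := n)) := by
  rw [legal_iff]
  intro u
  cases u with
  | U => simp [C2_g, C2_eU, C2_eW, μQ]
  | W =>
      simp only [C2_g, C2_eU, C2_eW, μQ]
      simp [hsum]
      omega
  | v j => simp [C2_g, C2_eU, C2_eW, μQ, Finset.sum_ite_eq']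

/-- A "rank" function placing the elements of `S` first. -/
lemma exists_rank (S : Finset (Fin n)) :
    ∃ j : Fin n → ℕ, Function.Injective j ∧ (∀ i, j i < n) ∧
      ∀ i, i ∈ S ↔ j i < S.card := by
  classical
  have hs : S.card ≤ n := by
    simpa using S.card_le_univ
  set T : Finset (Fin n) := univ.filter (fun k : Fin n => (k : ℕ) < S.card) with hT
  have hTmem : ∀ k : Fin n, k ∈ T ↔ (k : ℕ) < S.card := by
    intro k; simp [hT]
  have hTcard : T.card = S.card := by
    have : T = Finset.map (Fin.castLEEmb hs) Finset.univ := by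
      ext k
      simp only [hTmem, Finset.mem_map, Finset.mem_univ, true_and]
      constructor
      · intro h; exact ⟨⟨(k : ℕ), h⟩, by ext; simp⟩
      · rintro ⟨a, rfl⟩; simpa using a.isLt
    rw [this, Finset.card_map, Finset.card_univ, Fintype.card_fin]
  have hTc : (Tᶜ : Finset (Fin n)).card = (Sᶜ : Finset (Fin n)).card := by
    simp [Finset.card_compl, hTcard]
  let e1 : (T : Finset (Fin n)) ≃ (S : Finset (Fin n)) :=
    Finset.equivOfCardEq hTcard
  let e2 : (Tᶜ : Finset (Fin n)) ≃ (Sᶜ : Finset (Fin n)) :=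
    Finset.equivOfCardEq hTc
  refine ⟨fun i => if h : i ∈ S then ((e1.symm ⟨i, h⟩ : Fin n) : ℕ)
      else ((e2.symm ⟨i, by simpa using h⟩ : Fin n) : ℕ), ?_, ?_, ?_⟩
  · intro a b hab
    dsimp only at hab
    by_cases ha : a ∈ S <;> by_cases hb : b ∈ S
    · rw [dif_pos ha, dif_pos hb] at hab
      have : e1.symm ⟨a, ha⟩ = e1.symm ⟨b, hb⟩ := Subtype.ext (Fin.ext hab)
      have := congrArg (fun z => (e1 z : Fin n)) this
      simpa using this
    · rw [dif_pos ha, dif_neg hb] at hab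
      have h1 : ((e1.symm ⟨a, ha⟩ : Fin n) : ℕ) < S.card := by
        have := (e1.symm ⟨a, ha⟩).2
        rwa [hTmem] at this
      have h2 : ¬ ((e2.symm ⟨b, by simpa using hb⟩ : Fin n) : ℕ) < S.card := by
        have := (e2.symm ⟨b, by simpa using hb⟩).2
        rw [Finset.mem_compl, hTmem] at this
        exact this
      omega
    · rw [dif_neg ha, dif_pos hb] at hab
      have h1 : ((e1.symm ⟨b, hb⟩ : Fin n) : ℕ) < S.card := by
        have := (e1.symm ⟨b, hb⟩).2
        rwa [hTmem] at this
      have h2 : ¬ ((e2.symm ⟨a, by simpa using ha⟩ : Fin n) : ℕ) < S.card := by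
        have := (e2.symm ⟨a, by simpa using ha⟩).2
        rw [Finset.mem_compl, hTmem] at this
        exact this
      omega
    · rw [dif_neg ha, dif_neg hb] at hab
      have : e2.symm ⟨a, by simpa using ha⟩ = e2.symm ⟨b, by simpa using hb⟩ :=
        Subtype.ext (Fin.ext hab)
      have := congrArg (fun z => (e2 z : Fin n)) this
      simpa using this
  · intro i
    dsimp only
    by_cases h : i ∈ S
    · rw [dif_pos h]; exact (e1.symm ⟨i, h⟩ : Fin n).isLt
    · rw [dif_neg h]; exact (e2.symm ⟨i, by simpa using h⟩ : Fin n).isLt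
  · intro i
    dsimp only
    by_cases h : i ∈ S
    · rw [dif_pos h]
      have := (e1.symm ⟨i, h⟩).2
      rw [hTmem] at this
      simpa [h] using this
    · rw [dif_neg h]
      have := (e2.symm ⟨i, by simpa using h⟩).2
      rw [Finset.mem_compl, hTmem] at this
      simpa [h] using this

lemma edge_cases {e : Sym2 (PVert n)} (he : e ∈ (QGraph n).edgeSet) :
    e = gEdge n ∨ (∃ i, e = eU i) ∨ ∃ i, e = eW i := by
  have h : e ∈ (QGraph n).edgeFinset := by rwa [SimpleGraph.mem_edgeFinset]
  rw [edgeFinset_eq] at h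
  simp only [Finset.mem_insert, Finset.mem_union, Finset.mem_image, Finset.mem_univ,
    true_and] at h
  rcases h with h | ⟨i, hi⟩ | ⟨i, hi⟩
  · exact Or.inl h
  · exact Or.inr (Or.inl ⟨i, hi.symm⟩)
  · exact Or.inr (Or.inr ⟨i, hi.symm⟩)

lemma C1_ne_C2 {e : Sym2 (PVert n)} (he : e ∈ (QGraph n).edgeSet) : C1 e ≠ C2 e := by
  rcases edge_cases he with rfl | ⟨i, rfl⟩ | ⟨i, rfl⟩ <;>
    simp [C1_g, C2_g, C1_eU, C2_eU, C1_eW, C2_eW]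

section Construction

variable (S : Finset (Fin n)) (j : Fin n → ℕ)

/-- Position (time of flip) of the edge `{U, v i}`. -/
def pU (i : Fin n) : ℕ := if i ∈ S then j i else S.card + 1 + j i

/-- Position (time of flip) of the edge `{W, v i}`. -/
def pW (i : Fin n) : ℕ := if i ∈ S then S.card + j i else n + 1 + j i

/-- Position of an edge as a function on unordered pairs. -/
def posP : PVert n → PVert n → ℕ
  | .U, .v i => pU S j i
  | .v i, .U => pU S j i
  | .W, .v i => pW S j i
  | .v i, .W => pW S j i
  | .U, .W => 2 * S.card
  | .W, .U => 2 * S.card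
  | _, _ => 0

/-- Position of an edge. -/
def posQ : Sym2 (PVert n) → ℕ :=
  Sym2.lift ⟨posP S j, by intro a b; cases a <;> cases b <;> rfl⟩

lemma posQ_g : posQ S j (gEdge n) = 2 * S.card := rfl
lemma posQ_eU (i : Fin n) : posQ S j (eU i) = pU S j i := rfl
lemma posQ_eW (i : Fin n) : posQ S j (eW i) = pW S j i := rfl

/-- The configuration at time `t`: edges with position `< t` are flipped. -/
def CsFam (t : ℕ) : Sym2 (PVert n) → PVert n :=
  fun e => if posQ S j e < t then C2 e else C1 e

variable (hj1 : Function.Injective j) (hj2 : ∀ i, j i < n)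
  (hj3 : ∀ i, i ∈ S ↔ j i < S.card)

section WithHyps

variable {S j}
include hj3

lemma hpU (i : Fin n) :
    (j i < S.card ∧ pU S j i = j i) ∨
      (S.card ≤ j i ∧ pU S j i = S.card + 1 + j i) := by
  by_cases h : i ∈ S
  · exact Or.inl ⟨(hj3 i).1 h, if_pos h⟩
  · exact Or.inr ⟨le_of_not_gt (fun hl => h ((hj3 i).2 hl)), if_neg h⟩

lemma hpW (i : Fin n) :
    (j i < S.card ∧ pW S j i = S.card + j i) ∨
      (S.card ≤ j i ∧ pW S j i = n + 1 + j i) := by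
  by_cases h : i ∈ S
  · exact Or.inl ⟨(hj3 i).1 h, if_pos h⟩
  · exact Or.inr ⟨le_of_not_gt (fun hl => h ((hj3 i).2 hl)), if_neg h⟩

include hj2

lemma pos_le {e : Sym2 (PVert n)} (he : e ∈ (QGraph n).edgeSet) :
    posQ S j e ≤ 2 * n := by
  have hs : S.card ≤ n := by simpa using S.card_le_univ
  rcases edge_cases he with rfl | ⟨i, rfl⟩ | ⟨i, rfl⟩
  · rw [posQ_g]; omega
  · rw [posQ_eU]
    rcases hpU hj3 i with ⟨h1, h2⟩ | ⟨h1, h2⟩ <;> have := hj2 i <;> omega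
  · rw [posQ_eW]
    rcases hpW hj3 i with ⟨h1, h2⟩ | ⟨h1, h2⟩ <;> have := hj2 i <;> omega

include hj1

lemma pos_inj : ∀ e ∈ (QGraph n).edgeSet, ∀ f ∈ (QGraph n).edgeSet,
    posQ S j e = posQ S j f → e = f := by
  intro e he f hf hef
  have hs : S.card ≤ n := by simpa using S.card_le_univ
  rcases edge_cases he with rfl | ⟨i, rfl⟩ | ⟨i, rfl⟩ <;>
    rcases edge_cases hf with rfl | ⟨i', rfl⟩ | ⟨i', rfl⟩
  · rfl
  · exfalso
    rw [posQ_g, posQ_eU] at hef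
    rcases hpU hj3 i' with ⟨h1, h2⟩ | ⟨h1, h2⟩ <;> omega
  · exfalso
    rw [posQ_g, posQ_eW] at hef
    rcases hpW hj3 i' with ⟨h1, h2⟩ | ⟨h1, h2⟩ <;> have := hj2 i' <;> omega
  · exfalso
    rw [posQ_g, posQ_eU] at hef
    rcases hpU hj3 i with ⟨h1, h2⟩ | ⟨h1, h2⟩ <;> omega
  · rw [posQ_eU, posQ_eU] at hef
    have : j i = j i' := by
      rcases hpU hj3 i with ⟨h1, h2⟩ | ⟨h1, h2⟩ <;>
        rcases hpU hj3 i' with ⟨h3, h4⟩ | ⟨h3, h4⟩ <;> omega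
    exact congrArg eU (hj1 this)
  · exfalso
    rw [posQ_eU, posQ_eW] at hef
    rcases hpU hj3 i with ⟨h1, h2⟩ | ⟨h1, h2⟩ <;>
      rcases hpW hj3 i' with ⟨h3, h4⟩ | ⟨h3, h4⟩ <;>
      have := hj2 i <;> have := hj2 i' <;> omega
  · exfalso
    rw [posQ_g, posQ_eW] at hef
    rcases hpW hj3 i with ⟨h1, h2⟩ | ⟨h1, h2⟩ <;> have := hj2 i <;> omega
  · exfalso
    rw [posQ_eW, posQ_eU] at hef
    rcases hpW hj3 i with ⟨h1, h2⟩ | ⟨h1, h2⟩ <;>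
      rcases hpU hj3 i' with ⟨h3, h4⟩ | ⟨h3, h4⟩ <;>
      have := hj2 i <;> have := hj2 i' <;> omega
  · rw [posQ_eW, posQ_eW] at hef
    have : j i = j i' := by
      rcases hpW hj3 i with ⟨h1, h2⟩ | ⟨h1, h2⟩ <;>
        rcases hpW hj3 i' with ⟨h3, h4⟩ | ⟨h3, h4⟩ <;>
        have := hj2 i <;> have := hj2 i' <;> omega
    exact congrArg eW (hj1 this)

end WithHyps

lemma card_edgeFinset : (QGraph n).edgeFinset.card = 2 * n + 1 := by
  rw [edgeFinset_eq, Finset.card_insert_of_notMem, Finset.card_union_of_disjoint]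
  · rw [Finset.card_image_of_injective _ eU_inj, Finset.card_image_of_injective _ eW_inj]
    simp; omega
  · rw [Finset.disjoint_left]
    rintro a ha hb
    simp only [Finset.mem_image, Finset.mem_univ, true_and] at ha hb
    obtain ⟨i, rfl⟩ := ha
    obtain ⟨i', hi'⟩ := hb
    exact eU_ne_eW i i' hi'.symm
  · simp only [Finset.mem_union, Finset.mem_image, Finset.mem_univ, true_and]
    rintro (⟨i, hi⟩ | ⟨i, hi⟩)
    · exact g_ne_eU i hi.symm
    · exact g_ne_eW i hi.symm

lemma pos_surj {S : Finset (Fin n)} {j : Fin n → ℕ}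
    (hj1 : Function.Injective j) (hj2 : ∀ i, j i < n)
    (hj3 : ∀ i, i ∈ S ↔ j i < S.card) :
    ∀ t < 2 * n + 1, ∃ e ∈ (QGraph n).edgeSet, posQ S j e = t := by
  have himg : (QGraph n).edgeFinset.image (posQ S j) = Finset.range (2 * n + 1) := by
    apply Finset.eq_of_subset_of_card_le
    · intro t ht
      simp only [Finset.mem_image] at ht
      obtain ⟨e, he, rfl⟩ := ht
      rw [SimpleGraph.mem_edgeFinset] at he
      simp only [Finset.mem_range]
      have := pos_le hj2 hj3 he
      omega
    · rw [Finset.card_image_of_injOn, card_edgeFinset, Finset.card_range]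
      intro e he f hf h
      rw [Finset.mem_coe, SimpleGraph.mem_edgeFinset] at he hf
      exact pos_inj hj1 hj2 hj3 e he f hf h
  intro t ht
  have : t ∈ (QGraph n).edgeFinset.image (posQ S j) := by
    rw [himg]; simpa using ht
  simp only [Finset.mem_image] at this
  obtain ⟨e, he, h⟩ := this
  exact ⟨e, by rwa [SimpleGraph.mem_edgeFinset] at he, h⟩

lemma flip_pos {S : Finset (Fin n)} {j : Fin n → ℕ} {t : ℕ} {e : Sym2 (PVert n)}
    (h : CsFam S j t e ≠ CsFam S j (t + 1) e) : posQ S j e = t := by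
  by_contra hne
  apply h
  unfold CsFam
  by_cases hlt : posQ S j e < t
  · rw [if_pos hlt, if_pos (by omega)]
  · rw [if_neg hlt, if_neg (by omega)]

lemma isConf_CsFam {S : Finset (Fin n)} {j : Fin n → ℕ} (t : ℕ) :
    IsConf (QGraph n) (CsFam S j t) := by
  intro e he
  unfold CsFam
  by_cases h : posQ S j e < t
  · rw [if_pos h]; exact isConf_C2 e he
  · rw [if_neg h]; exact isConf_C1 e he

lemma legal_CsFam {S : Finset (Fin n)} {j : Fin n → ℕ} (x : Fin n → ℕ) (N : ℕ)
    (hpos : ∀ i, 0 < x i) (hsum : ∑ i, x i = 2 * N) (hS : ∑ i ∈ S, x i = N)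
    (hj2 : ∀ i, j i < n) (hj3 : ∀ i, i ∈ S ↔ j i < S.card) (t : ℕ) :
    Legal (QGraph n) (wQ x N) (μQ x N) (CsFam S j t) := by
  have hs : S.card ≤ n := by simpa using S.card_le_univ
  have hcomp : ∑ i ∈ Sᶜ, x i = N := by
    have := Finset.sum_add_sum_compl S x
    omega
  rw [legal_iff]
  intro u
  cases u with
  | U =>
      simp only [CsFam, (posQ_g S j).trans rfl, fun i => (posQ_eU S j i).trans rfl, fun i => (posQ_eW S j i).trans rfl, C1_g, C2_g, C1_eU, C2_eU, C1_eW, C2_eW, μQ]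
      have h2 : ∀ i : Fin n,
          (if (if pU S j i < t then PVert.v i else PVert.U) = PVert.U then x i else 0) =
            (if t ≤ pU S j i then x i else 0) := by
        intro i
        by_cases h : pU S j i < t
        · have h' : ¬ t ≤ pU S j i := by omega
          simp [h, h']
        · have h' : t ≤ pU S j i := by omega
          simp [h, h']
      have h3 : ∀ i : Fin n,
          (if (if pW S j i < t then PVert.W else PVert.v i) = PVert.U then x i else 0) = 0 := by
        intro i; by_cases h : pW S j i < t <;> simp [h]
      rw [Finset.sum_congr rfl (fun i _ => h2 i), Finset.sum_congr rfl (fun i _ => h3 i)]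
      by_cases hg : 2 * S.card < t
      · rw [if_pos (by simp [hg])]
        exact Nat.le_add_right N _
      · rw [if_neg (by simp [hg])]
        have hsub : ∑ i ∈ Sᶜ, x i ≤ ∑ i, if t ≤ pU S j i then x i else 0 := by
          rw [← Finset.sum_filter]
          apply Finset.sum_le_sum_of_subset
          intro i hi
          rw [Finset.mem_compl] at hi
          simp only [Finset.mem_filter, Finset.mem_univ, true_and]
          have h1 : S.card ≤ j i := le_of_not_gt (fun hl => hi ((hj3 i).2 hl))
          rw [pU, if_neg hi]
          omega
        simp only [Finset.sum_const_zero]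
        omega
  | W =>
      simp only [CsFam, (posQ_g S j).trans rfl, fun i => (posQ_eU S j i).trans rfl, fun i => (posQ_eW S j i).trans rfl, C1_g, C2_g, C1_eU, C2_eU, C1_eW, C2_eW, μQ]
      have h2 : ∀ i : Fin n,
          (if (if pU S j i < t then PVert.v i else PVert.U) = PVert.W then x i else 0) = 0 := by
        intro i; by_cases h : pU S j i < t <;> simp [h]
      have h3 : ∀ i : Fin n,
          (if (if pW S j i < t then PVert.W else PVert.v i) = PVert.W then x i else 0) =
            (if pW S j i < t then x i else 0) := by
        intro i; by_cases h : pW S j i < t <;> simp [h]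
      rw [Finset.sum_congr rfl (fun i _ => h2 i), Finset.sum_congr rfl (fun i _ => h3 i)]
      by_cases hg : 2 * S.card < t
      · rw [if_neg (by simp [hg])]
        have hsub : ∑ i ∈ S, x i ≤ ∑ i, if pW S j i < t then x i else 0 := by
          rw [← Finset.sum_filter]
          apply Finset.sum_le_sum_of_subset
          intro i hi
          simp only [Finset.mem_filter, Finset.mem_univ, true_and]
          have h1 : j i < S.card := (hj3 i).1 hi
          rw [pW, if_pos hi]
          omega
        simp only [Finset.sum_const_zero]
        omega
      · rw [if_pos (by simp [hg])]
        exact Nat.le_add_right N _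
  | v k =>
      simp only [CsFam, (posQ_g S j).trans rfl, fun i => (posQ_eU S j i).trans rfl, fun i => (posQ_eW S j i).trans rfl, C1_g, C2_g, C1_eU, C2_eU, C1_eW, C2_eW, μQ]
      have h2 : ∀ i : Fin n,
          (if (if pU S j i < t then PVert.v i else PVert.U) = PVert.v k then x i else 0) =
            (if pU S j i < t ∧ i = k then x i else 0) := by
        intro i; by_cases h : pU S j i < t <;> by_cases hik : i = k <;> simp [h, hik]
      have h3 : ∀ i : Fin n,
          (if (if pW S j i < t then PVert.W else PVert.v i) = PVert.v k then x i else 0) =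
            (if ¬ (pW S j i < t) ∧ i = k then x i else 0) := by
        intro i; by_cases h : pW S j i < t <;> by_cases hik : i = k <;> simp [h, hik]
      rw [Finset.sum_congr rfl (fun i _ => h2 i), Finset.sum_congr rfl (fun i _ => h3 i)]
      have hgz : (if (if 2 * S.card < t then PVert.U else PVert.W) = PVert.v k then N else 0)
          = 0 := by
        by_cases h : 2 * S.card < t <;> simp [h]
      rw [hgz]
      have hUW : pU S j k ≤ pW S j k := by
        rcases hpU hj3 k with ⟨h1, h2'⟩ | ⟨h1, h2'⟩ <;>
          rcases hpW hj3 k with ⟨h3', h4⟩ | ⟨h3', h4⟩ <;> have := hj2 k <;> omega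
      by_cases h : pU S j k < t
      · have hk : x k ≤ ∑ i, if pU S j i < t ∧ i = k then x i else 0 := by
          have := Finset.single_le_sum
            (f := fun i => if pU S j i < t ∧ i = k then x i else 0)
            (fun i _ => Nat.zero_le _) (Finset.mem_univ k)
          simpa [h] using this
        omega
      · have hk : x k ≤ ∑ i, if ¬ (pW S j i < t) ∧ i = k then x i else 0 := by
          have := Finset.single_le_sum
            (f := fun i => if ¬ (pW S j i < t) ∧ i = k then x i else 0)
            (fun i _ => Nat.zero_le _) (Finset.mem_univ k)
          have hW : ¬ (pW S j k < t) := by omega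
          simpa [hW] using this
        omega

end Construction

lemma crossing {P : ℕ → Prop} : ∀ m : ℕ, ¬ P 0 → P m → ∃ k, k < m ∧ ¬ P k ∧ P (k + 1) := by
  intro m
  induction m with
  | zero => intro h0 hm; exact absurd hm h0
  | succ m ih =>
    intro h0 hm
    by_cases h : P m
    · obtain ⟨k, hk, h1, h2⟩ := ih h0 h
      exact ⟨k, hk.trans (Nat.lt_succ_self m), h1, h2⟩
    · exact ⟨m, Nat.lt_succ_self m, h, hm⟩

lemma conf_g {C : Sym2 (PVert n) → PVert n} (h : IsConf (QGraph n) C) :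
    C (gEdge n) = PVert.U ∨ C (gEdge n) = PVert.W := by
  have := h (gEdge n) g_mem
  simpa [gEdge, Sym2.mem_iff] using this

lemma conf_eU {C : Sym2 (PVert n) → PVert n} (h : IsConf (QGraph n) C) (i : Fin n) :
    C (eU i) = PVert.U ∨ C (eU i) = PVert.v i := by
  have := h (eU i) (eU_mem i)
  simpa [eU, Sym2.mem_iff] using this

lemma conf_eW {C : Sym2 (PVert n) → PVert n} (h : IsConf (QGraph n) C) (i : Fin n) :
    C (eW i) = PVert.W ∨ C (eW i) = PVert.v i := by
  have := h (eW i) (eW_mem i)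
  simpa [eW, Sym2.mem_iff] using this

end Aux3

open Fin.NatCast in
theorem stmt3 (n N : ℕ) (x : Fin n → ℕ) (hpos : ∀ i, 0 < x i)
    (hsum : ∑ i, x i = 2 * N) :
    IsConf (QGraph n) (C1 (n := n)) ∧
    Legal (QGraph n) (wQ x N) (μQ x N) (C1 (n := n)) ∧
    IsConf (QGraph n) (C2 (n := n)) ∧
    Legal (QGraph n) (wQ x N) (μQ x N) (C2 (n := n)) ∧
    ((∃ (m : ℕ) (Cs : Fin (m + 1) → Sym2 (PVert n) → PVert n),
        ConfEq (QGraph n) (Cs 0) (C1 (n := n)) ∧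
        ConfEq (QGraph n) (Cs (Fin.last m)) (C2 (n := n)) ∧
        IsReconfSeq (QGraph n) (wQ x N) (μQ x N) Cs ∧
        AtMostOnce (QGraph n) Cs) ↔
      ∃ S : Finset (Fin n), ∑ i ∈ S, x i = N) := by
  classical
  refine ⟨Aux3.isConf_C1, Aux3.legal_C1 x N hsum, Aux3.isConf_C2, Aux3.legal_C2 x N hsum,
    ?_, ?_⟩
  · -- forward direction
    rintro ⟨m, Cs, h0, hlast, ⟨hconf, hstep⟩, -⟩
    have hg := Aux3.g_mem (n := n)
    have hCs0 : Cs 0 (gEdge n) = PVert.W := by rw [h0 _ hg]; rfl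
    have hCsl : Cs (Fin.last m) (gEdge n) = PVert.U := by rw [hlast _ hg]; rfl
    set P : ℕ → Prop := fun k => Cs ((k : ℕ) : Fin (m + 1)) (gEdge n) = PVert.U with hP
    have h00 : ¬ P 0 := by
      simp only [hP, Nat.cast_zero, hCs0]
      simp
    have hmm : P m := by
      have hcast : ((m : ℕ) : Fin (m + 1)) = Fin.last m := by
        ext
        simp [Fin.val_cast_of_lt (Nat.lt_succ_self m)]
      simp only [hP, hcast, hCsl]
    obtain ⟨k, hk, hk1, hk2⟩ := Aux3.crossing m h00 hmm
    set i : Fin m := ⟨k, hk⟩ with hi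
    have hc1 : ((k : ℕ) : Fin (m + 1)) = i.castSucc := by
      ext
      rw [Fin.val_cast_of_lt (by omega : k < m + 1)]
      rfl
    have hc2 : (((k + 1 : ℕ)) : Fin (m + 1)) = i.succ := by
      ext
      rw [Fin.val_cast_of_lt (by omega : k + 1 < m + 1)]
      rfl
    rw [hP] at hk1 hk2
    simp only [hc1] at hk1
    simp only [hc2] at hk2
    set D := Cs i.castSucc with hD
    set D' := Cs i.succ with hD'
    have hDg : D (gEdge n) = PVert.W := by
      rcases Aux3.conf_g (hconf i.castSucc).1 with h | h
      · exact absurd h hk1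
      · exact h
    have hD'g : D' (gEdge n) = PVert.U := hk2
    obtain ⟨e₀, he₀, hne₀, hothers⟩ := hstep i
    have he0g : e₀ = gEdge n := by
      by_contra h
      have := hothers (gEdge n) hg (fun hh => h hh.symm)
      rw [← hD, ← hD'] at this
      rw [hDg, hD'g] at this
      simp at this
    have hunchanged : ∀ f ∈ (QGraph n).edgeSet, f ≠ gEdge n → D f = D' f := by
      intro f hf hfg
      exact hothers f hf (by rwa [he0g])
    -- the subset
    refine ⟨Finset.univ.filter (fun i => D' (Aux3.eW i) = PVert.W), ?_⟩
    set S := Finset.univ.filter (fun i => D' (Aux3.eW i) = PVert.W) with hSdef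
    -- lower bound: from legality of D' at W
    have hlow : N ≤ ∑ i ∈ S, x i := by
      have hL := (Aux3.legal_iff x N D').1 (hconf i.succ).2 PVert.W
      have ht1 : (if D' (gEdge n) = PVert.W then N else 0) = 0 := by simp [hD'g]
      have ht2 : ∀ i' : Fin n,
          (if D' (Aux3.eU i') = PVert.W then x i' else 0) = 0 := by
        intro i'
        rcases Aux3.conf_eU (hconf i.succ).1 i' with h | h <;> rw [← hD'] at h <;> simp [h]
      rw [ht1, Finset.sum_congr rfl (fun i' _ => ht2 i')] at hL
      simp only [Finset.sum_const_zero, zero_add] at hL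
      calc N = μQ x N PVert.W := rfl
        _ ≤ _ := hL
        _ = ∑ i ∈ S, x i := by rw [hSdef, Finset.sum_filter]
    -- for i ∈ S, the edge {U, v i} points to v i in D
    have hSprop : ∀ i' ∈ S, D (Aux3.eU i') = PVert.v i' := by
      intro i' hi'
      rw [hSdef, Finset.mem_filter] at hi'
      have hWi : D (Aux3.eW i') = PVert.W := by
        rw [hunchanged (Aux3.eW i') (Aux3.eW_mem i') (Aux3.g_ne_eW i').symm]
        · exact hi'.2
      have hL := (Aux3.legal_iff x N D).1 (hconf i.castSucc).2 (PVert.v i')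
      have ht1 : (if D (gEdge n) = PVert.v i' then N else 0) = 0 := by simp [hDg]
      have ht2 : ∑ b : Fin n, (if D (Aux3.eU b) = PVert.v i' then x b else 0) =
          (if D (Aux3.eU i') = PVert.v i' then x i' else 0) := by
        apply Finset.sum_eq_single
        · intro b _ hb
          rcases Aux3.conf_eU (hconf i.castSucc).1 b with h | h <;> rw [← hD] at h <;>
            simp [h, hb]
        · intro h; exact absurd (Finset.mem_univ i') h
      have ht3 : ∑ b : Fin n, (if D (Aux3.eW b) = PVert.v i' then x b else 0) = 0 := by
        apply Finset.sum_eq_zero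
        intro b _
        rcases Aux3.conf_eW (hconf i.castSucc).1 b with h | h <;> rw [← hD] at h
        · simp [h]
        · by_cases hb : b = i'
          · subst hb; rw [hWi]; simp
          · simp [h, hb]
      rw [ht1, ht2, ht3] at hL
      simp only [zero_add, add_zero] at hL
      have hx := hpos i'
      have : μQ x N (PVert.v i') = x i' := rfl
      rw [this] at hL
      by_contra h
      rw [if_neg h] at hL
      omega
    -- upper bound: from legality of D at U
    have hA : N ≤ ∑ i' ∈ Finset.univ.filter (fun b => D (Aux3.eU b) = PVert.U), x i' := by
      have hL := (Aux3.legal_iff x N D).1 (hconf i.castSucc).2 PVert.U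
      have ht1 : (if D (gEdge n) = PVert.U then N else 0) = 0 := by simp [hDg]
      have ht3 : ∀ b : Fin n, (if D (Aux3.eW b) = PVert.U then x b else 0) = 0 := by
        intro b
        rcases Aux3.conf_eW (hconf i.castSucc).1 b with h | h <;> rw [← hD] at h <;> simp [h]
      rw [ht1, Finset.sum_congr rfl (fun b _ => ht3 b)] at hL
      simp only [Finset.sum_const_zero, add_zero, zero_add] at hL
      calc N = μQ x N PVert.U := rfl
        _ ≤ _ := hL
        _ = _ := by rw [Finset.sum_filter]
    set A := Finset.univ.filter (fun b => D (Aux3.eU b) = PVert.U) with hAdef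
    have hdisj : Disjoint S A := by
      rw [Finset.disjoint_left]
      intro b hb hbA
      rw [hAdef, Finset.mem_filter] at hbA
      have := hSprop b hb
      rw [hbA.2] at this
      simp at this
    have htot : ∑ i' ∈ S, x i' + ∑ i' ∈ A, x i' ≤ 2 * N := by
      rw [← Finset.sum_union hdisj, ← hsum]
      exact Finset.sum_le_sum_of_subset (Finset.subset_univ _)
    omega
  · -- backward direction
    rintro ⟨S, hS⟩
    obtain ⟨j, hj1, hj2, hj3⟩ := Aux3.exists_rank S
    refine ⟨2 * n + 1, fun t => Aux3.CsFam S j (t : ℕ), ?_, ?_, ⟨?_, ?_⟩, ?_⟩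
    · intro e he
      simp [Aux3.CsFam]
    · intro e he
      have hle := Aux3.pos_le hj2 hj3 he
      have hlt : Aux3.posQ S j e < ((Fin.last (2 * n + 1) : Fin (2 * n + 2)) : ℕ) := by
        rw [Fin.val_last]; omega
      simp only [Aux3.CsFam, if_pos hlt]
    · intro t
      exact ⟨Aux3.isConf_CsFam _, Aux3.legal_CsFam x N hpos hsum hS hj2 hj3 _⟩
    · intro i
      obtain ⟨e, he, hpe⟩ := Aux3.pos_surj hj1 hj2 hj3 i.val (by omega)
      refine ⟨e, he, ?_, ?_⟩
      · have h1 : Aux3.CsFam S j ((i.castSucc : Fin (2 * n + 2)) : ℕ) e = C1 e := by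
          simp only [Aux3.CsFam, Fin.coe_castSucc]
          rw [if_neg (by omega)]
        have h2 : Aux3.CsFam S j ((i.succ : Fin (2 * n + 2)) : ℕ) e = C2 e := by
          simp only [Aux3.CsFam, Fin.val_succ]
          rw [if_pos (by omega)]
        show Aux3.CsFam S j ((i.castSucc : Fin (2 * n + 2)) : ℕ) e ≠
          Aux3.CsFam S j ((i.succ : Fin (2 * n + 2)) : ℕ) e
        rw [h1, h2]
        exact Aux3.C1_ne_C2 he
      · intro f hf hfe
        have hne : Aux3.posQ S j f ≠ (i : ℕ) := by
          intro h
          exact hfe (Aux3.pos_inj hj1 hj2 hj3 f hf e he (h.trans hpe.symm))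
        simp only [Aux3.CsFam, Fin.coe_castSucc, Fin.val_succ]
        by_cases hlt : Aux3.posQ S j f < (i : ℕ)
        · rw [if_pos hlt, if_pos (by omega)]
        · rw [if_neg hlt, if_neg (by omega)]
    · intro e he i i' h1 h2
      simp only [Aux3.CsFam, Fin.coe_castSucc, Fin.val_succ] at h1 h2
      have p1 : Aux3.posQ S j e = (i : ℕ) := Aux3.flip_pos h1
      have p2 : Aux3.posQ S j e = (i' : ℕ) := Aux3.flip_pos h2
      ext
      omega
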